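/- Let λ ∈ P⁺ be nonzero. Then V(ξ(1,λ)) is isomorphic, as a 𝔤[t]-module, to the quotient of W_loc(λ) by the submodule generated by the elements (x_α⁻ ⊗ t^{s_α}) w_λ for α ∈ R⁺ with d_α > 1, together with the elements (x_α⁻ ⊗ t^{s_α−1})² w_λ for α ∈ R⁺ with d_α = 3 and m_α = 1. In particular, if 𝔤 is simply laced then W_loc(λ) ≅ V(ξ(1,λ)). -/

import Mathlib

open scoped TensorProduct
open Polynomial

noncomputable section

/-! ## The current algebra `𝔤[t] = ℂ[t] ⊗ 𝔤` and its universal enveloping algebra -/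

variable (L : Type) [LieRing L] [LieAlgebra ℂ L]

/-- The current algebra `𝔤[t] = ℂ[t] ⊗ 𝔤` of a complex Lie algebra `𝔤`. -/
abbrev CurAlg := Polynomial ℂ ⊗[ℂ] L

instance : LieAlgebra ℂ (CurAlg L) where
  lie_smul c x y := by
    have h := lie_smul (algebraMap ℂ (Polynomial ℂ) c) x y
    rwa [algebraMap_smul, algebraMap_smul] at h

/-- The universal enveloping algebra `U(𝔤[t])`. -/
abbrev UCA := UniversalEnvelopingAlgebra ℂ (CurAlg L)

attribute [local instance 100] LieRing.ofAssociativeRing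

/-- The canonical embedding `𝔤[t] → U(𝔤[t])`. -/
abbrev ιU : CurAlg L →ₗ⁅ℂ⁆ UCA L := UniversalEnvelopingAlgebra.ι ℂ

variable {L}

/-- The element `x ⊗ t^s` of `U(𝔤[t])`. -/
abbrev xt (x : L) (s : ℕ) : UCA L := ιU L ((X ^ s : ℂ[X]) ⊗ₜ x)

/-- Divided power `u^{(q)} = u^q/q!`. -/
def dpow (u : UCA L) (q : ℕ) : UCA L := (q.factorial : ℂ)⁻¹ • u ^ q

/-! ## Root data for `𝔤`, the local Weyl module and the modules `V(ξ)`.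

`Φ` indexes the positive roots `R⁺`; `ep α`, `em α`, `hc α` are the elements
`x_α⁺ ∈ 𝔤_α`, `x_α⁻ ∈ 𝔤_{-α}` and the coroot `h_α`; `ιI` indexes the simple roots via
`simple : ιI → Φ`.  The functional `lam` is the weight `λ` and `lamNat α = λ(h_α) ∈ ℤ≥0`. -/

variable {Φ ιI : Type}

/-- The nilpotent subalgebra `𝔫⁺`, namely the span of the positive root vectors. -/
def posPart (ep : Φ → L) : Submodule ℂ L := Submodule.span ℂ (Set.range ep)

/-- The Cartan subalgebra `𝔥`, namely the span of the coroots. -/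
def cartan (hc : Φ → L) : Submodule ℂ L := Submodule.span ℂ (Set.range hc)

/-- The generators of the defining left ideal of the local Weyl module `W_loc(λ)`. -/
def weylGens (ep em hc : Φ → L) (simple : ιI → Φ) (lam : Module.Dual ℂ L)
    (lamNat : Φ → ℕ) : Set (UCA L) :=
  {u | ∃ x ∈ posPart ep, ∃ s : ℕ, u = xt x s} ∪
    {u | ∃ x ∈ cartan hc, ∃ s : ℕ, u = xt x s - (if s = 0 then lam x else 0) • 1} ∪
    {u | ∃ i : ιI, u = xt (em (simple i)) 0 ^ (lamNat (simple i) + 1)}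

/-- The local Weyl module `W_loc(λ)`, as quotient of `U(𝔤[t])` by the left ideal generated by
the elements `x ⊗ t^s` for `x ∈ 𝔫⁺`, `h ⊗ t^s − δ_{s,0}λ(h)·1` for `h ∈ 𝔥`, and
`(x_i⁻ ⊗ 1)^{λ(h_i)+1}` for `i ∈ I`. -/
abbrev Wloc (ep em hc : Φ → L) (simple : ιI → Φ) (lam : Module.Dual ℂ L) (lamNat : Φ → ℕ) :=
  (UCA L) ⧸ Submodule.span (UCA L) (weylGens ep em hc simple lam lamNat)

/-- The cyclic generator `w_λ` of `W_loc(λ)`, the image of `1`. -/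
def wLam (ep em hc : Φ → L) (simple : ιI → Φ) (lam : Module.Dual ℂ L) (lamNat : Φ → ℕ) :
    Wloc ep em hc simple lam lamNat := Submodule.Quotient.mk 1

/-- The sum `Σ_{j ≥ k+1} ξ_j` of the parts of a partition beyond the `k`-th one (the partition
being recorded as the function `p : ℕ → ℕ` of its parts in `0`-based indexing, `p j = ξ_{j+1}`). -/
def tailSum (p : ℕ → ℕ) (k : ℕ) : ℕ := ∑ᶠ j ∈ {j : ℕ | k ≤ j}, p j

/-- `ξ = (ξ^α)_{α ∈ R⁺}` is a `λ`-compatible tuple of partitions: each `ξ^α` is a partition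
(weakly decreasing, finitely many nonzero parts) with `|ξ^α| = λ(h_α)`. -/
def IsCompatible (lamNat : Φ → ℕ) (ξ : Φ → ℕ → ℕ) : Prop :=
  ∀ α, Antitone (ξ α) ∧ (∃ N, ∀ j, N ≤ j → ξ α j = 0) ∧ ∑ᶠ j, ξ α j = lamNat α

/-- The generators `(x_α⁺ ⊗ t)^s (x_α⁻ ⊗ 1)^{s+r} w_λ`, for `α ∈ R⁺` and `s, r ≥ 1` such that
`s + r ≥ 1 + rk + Σ_{j ≥ k+1} ξ^α_j` for some `k ≥ 1`, of the submodule of `W_loc(λ)` defining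
`V(ξ)`. -/
def xiGens (ep em hc : Φ → L) (simple : ιI → Φ) (lam : Module.Dual ℂ L) (lamNat : Φ → ℕ)
    (ξ : Φ → ℕ → ℕ) : Set (Wloc ep em hc simple lam lamNat) :=
  {v | ∃ (α : Φ) (s r : ℕ), 1 ≤ s ∧ 1 ≤ r ∧
        (∃ k, 1 ≤ k ∧ s + r ≥ 1 + r * k + tailSum (ξ α) k) ∧
        v = (xt (ep α) 1 ^ s * xt (em α) 0 ^ (s + r)) • wLam ep em hc simple lam lamNat}

/-- The module `V(ξ)`. -/
abbrev VXi (ep em hc : Φ → L) (simple : ιI → Φ) (lam : Module.Dual ℂ L) (lamNat : Φ → ℕ)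
    (ξ : Φ → ℕ → ℕ) :=
  Wloc ep em hc simple lam lamNat ⧸
    Submodule.span (UCA L) (xiGens ep em hc simple lam lamNat ξ)

/-- The cyclic generator `v_ξ` of `V(ξ)`, the image of `w_λ`. -/
def vXi (ep em hc : Φ → L) (simple : ιI → Φ) (lam : Module.Dual ℂ L) (lamNat : Φ → ℕ)
    (ξ : Φ → ℕ → ℕ) : VXi ep em hc simple lam lamNat ξ :=
  Submodule.Quotient.mk (wLam ep em hc simple lam lamNat)


lemma tri_sum {M : Type*} [AddCommMonoid M] (n : ℕ) (F : ℕ → ℕ → M) :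
    ∑ c ∈ Finset.range (n+1), ∑ a ∈ Finset.range (n+1-c), F c a
      = ∑ m ∈ Finset.range (n+1), ∑ k ∈ Finset.range (m+1), F k (m-k) := by
  rw [Finset.sum_sigma', Finset.sum_sigma']
  refine Finset.sum_nbij' (fun p => ⟨p.1 + p.2, p.1⟩) (fun p => ⟨p.2, p.1 - p.2⟩) ?_ ?_ ?_ ?_ ?_
  · rintro ⟨c, a⟩ hp
    simp only [Finset.mem_sigma, Finset.mem_range] at hp ⊢
    omega
  · rintro ⟨m, k⟩ hp
    simp only [Finset.mem_sigma, Finset.mem_range] at hp ⊢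
    omega
  · rintro ⟨c, a⟩ hp
    simp only [Finset.mem_sigma, Finset.mem_range] at hp
    have h1 : c + a - c = a := by omega
    simp [h1]
  · rintro ⟨m, k⟩ hp
    simp only [Finset.mem_sigma, Finset.mem_range] at hp
    have h1 : k + (m - k) = m := by omega
    simp [h1]
  · rintro ⟨c, a⟩ hp
    simp only [Finset.mem_sigma, Finset.mem_range] at hp
    simp only []
    congr 1
    omega

lemma tri_swap {M : Type*} [AddCommMonoid M] (n : ℕ) (F : ℕ → ℕ → M) :
    ∑ c ∈ Finset.range (n+1), ∑ a ∈ Finset.range (n+1-c), F c a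
      = ∑ a ∈ Finset.range (n+1), ∑ c ∈ Finset.range (n+1-a), F c a := by
  rw [tri_sum n F, tri_sum n (fun a c => F c a)]
  refine Finset.sum_congr rfl fun m _ => ?_
  rw [← Finset.sum_range_reflect]
  refine Finset.sum_congr rfl fun k hk => ?_
  simp only [Finset.mem_range] at hk
  congr 1 <;> omega

lemma tri_diag {M : Type*} [AddCommMonoid M] (n : ℕ) (G : ℕ → M) :
    ∑ c ∈ Finset.range (n+1), ∑ a ∈ Finset.range (n+1-c), G (c + a)
      = ∑ m ∈ Finset.range (n+1), (m+1) • G m := by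
  rw [tri_sum n (fun c a => G (c + a))]
  refine Finset.sum_congr rfl fun m hm => ?_
  rw [Finset.sum_congr rfl (fun k hk => ?_), Finset.sum_const, Finset.card_range]
  simp only [Finset.mem_range] at hk
  congr 1
  omega

section Aux

variable {L : Type} [LieRing L] [LieAlgebra ℂ L]

lemma xt_zero_elt (s : ℕ) : xt (0 : L) s = 0 := by
  show (ιU L) ((X ^ s : ℂ[X]) ⊗ₜ (0 : L)) = 0
  rw [TensorProduct.tmul_zero, map_zero]

lemma xt_mul_sub (x y : L) (a b : ℕ) :
    xt x a * xt y b - xt y b * xt x a = xt ⁅x, y⁆ (a + b) := by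
  have h : (ιU L) ⁅(X ^ a : ℂ[X]) ⊗ₜ[ℂ] x, (X ^ b : ℂ[X]) ⊗ₜ[ℂ] y⁆
      = ⁅xt x a, xt y b⁆ := LieHom.map_lie _ _ _
  rw [Ring.lie_def] at h
  rw [← h, LieAlgebra.ExtendScalars.bracket_tmul, ← pow_add]

lemma xt_comm_self (x : L) (a b : ℕ) : xt x a * xt x b = xt x b * xt x a := by
  have := xt_mul_sub x x a b
  rw [lie_self, xt_zero_elt, sub_eq_zero] at this
  exact this

lemma xt_neg_two_smul (x : L) (n : ℕ) : xt (-(2 • x)) n = (-2 : ℂ) • xt x n := by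
  show (ιU L) ((X ^ n : ℂ[X]) ⊗ₜ (-(2 • x))) = (-2 : ℂ) • xt x n
  rw [two_nsmul, TensorProduct.tmul_neg, TensorProduct.tmul_add, map_neg,
    map_add]
  show -(xt x n + xt x n) = (-2 : ℂ) • xt x n
  rw [neg_smul, two_smul]

variable {M : Type} [AddCommGroup M] [Module ℂ M] [Module (UCA L) M]
  [IsScalarTower ℂ (UCA L) M]

lemma csmul_comm (c : ℂ) (u : UCA L) (x : M) : u • (c • x) = c • (u • x) := by
  rw [← IsScalarTower.algebraMap_smul (UCA L) c x, smul_smul, ← Algebra.commutes c u,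
    ← smul_smul, IsScalarTower.algebraMap_smul]

/-- `Tg f' w r s = ∑_{b₁+⋯+b_r = s} (f'⊗t^{b₁})⋯(f'⊗t^{b_r}) • w`. -/
def Tg (f' : L) (w : M) : ℕ → ℕ → M
  | 0 => fun s => if s = 0 then w else 0
  | (r+1) => fun s => ∑ a ∈ Finset.range (s+1), xt f' a • Tg f' w r (s - a)

lemma Tg_succ (f' : L) (w : M) (r s : ℕ) :
    Tg f' w (r+1) s = ∑ a ∈ Finset.range (s+1), xt f' a • Tg f' w r (s - a) := rfl

lemma Tg_one (f' : L) (w : M) (q : ℕ) : Tg f' w 1 q = xt f' q • w := by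
  rw [Tg_succ]
  rw [Finset.sum_eq_single q]
  · simp [Tg]
  · intro b hb hbq
    simp only [Finset.mem_range] at hb
    have : q - b ≠ 0 := by omega
    simp [Tg, this]
  · intro h
    exact absurd (Finset.self_mem_range_succ q) h

lemma Tg_zero_right (f' : L) (w : M) (n : ℕ) : Tg f' w n 0 = (xt f' 0) ^ n • w := by
  induction n with
  | zero => simp [Tg]
  | succ n ih => rw [Tg_succ, Finset.sum_range_one, ih, smul_smul, ← pow_succ']

end Aux

section Aux2
set_option linter.unusedSectionVars false

variable {L : Type} [LieRing L] [LieAlgebra ℂ L]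
variable {M : Type} [AddCommGroup M] [Module ℂ M] [Module (UCA L) M]
  [IsScalarTower ℂ (UCA L) M]
variable {e' f' h' : L} {w : M}

/-- commutation of `f`-factors on any vector -/
lemma ff_smul (v : M) (a b : ℕ) :
    xt f' a • xt f' b • v = xt f' b • xt f' a • v := by
  rw [smul_smul, smul_smul, xt_comm_self]

/-- `h_c • (f_b • v) = f_b • (h_c • v) - 2 • f_{b+c} • v` -/
lemma hf_smul (hhf : ⁅h', f'⁆ = -(2 • f')) (v : M) (c b : ℕ) :
    xt h' c • xt f' b • v
      = xt f' b • xt h' c • v + (-2 : ℂ) • xt f' (b + c) • v := by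
  have h := xt_mul_sub h' f' c b
  rw [hhf, xt_neg_two_smul, sub_eq_iff_eq_add] at h
  rw [Nat.add_comm b c, smul_smul, h, add_smul, smul_assoc, mul_smul, add_comm]

/-- `e • (f_b • v) = f_b • (e • v) + h_{b+1} • v` -/
lemma ef_smul (hef : ⁅e', f'⁆ = h') (v : M) (b : ℕ) :
    xt e' 1 • xt f' b • v = xt f' b • xt e' 1 • v + xt h' (b + 1) • v := by
  have h := xt_mul_sub e' f' 1 b
  rw [hef, sub_eq_iff_eq_add, Nat.add_comm 1 b] at h
  rw [smul_smul, h, add_smul, mul_smul, add_comm]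

/-- the key `h`-current summation lemma -/
lemma hl_sum (hhf : ⁅h', f'⁆ = -(2 • f')) (hwh : ∀ k, k ≠ 0 → xt h' k • w = 0) :
    ∀ r s : ℕ, ∑ c ∈ Finset.range (s+1), xt h' (c+1) • Tg f' w r (s - c)
      = ((-2 : ℂ) * (s+1)) • Tg f' w r (s+1) := by
  intro r
  induction r with
  | zero =>
    intro s
    have hz : ∀ c ∈ Finset.range (s+1), xt h' (c+1) • Tg f' w 0 (s - c) = 0 := by
      intro c hc
      by_cases h : s - c = 0
      · simp only [Tg, h, if_pos rfl]
        exact hwh (c+1) (Nat.succ_ne_zero c)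
      · simp [Tg, h]
    rw [Finset.sum_congr rfl hz, Finset.sum_const, smul_zero]
    have : Tg f' w 0 (s+1) = 0 := by simp [Tg]
    rw [this, smul_zero]
  | succ r ih =>
    intro s
    have expand : ∀ c ∈ Finset.range (s+1),
        xt h' (c+1) • Tg f' w (r+1) (s - c)
          = (∑ a ∈ Finset.range (s+1-c),
              xt f' a • xt h' (c+1) • Tg f' w r (s - c - a))
            + ∑ a ∈ Finset.range (s+1-c),
              (-2 : ℂ) • xt f' ((c + a) + 1) • Tg f' w r (s - (c + a)) := by
      intro c hc
      simp only [Finset.mem_range] at hc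
      have hrange : s - c + 1 = s + 1 - c := by omega
      rw [Tg_succ, Finset.smul_sum, ← hrange, ← Finset.sum_add_distrib]
      refine Finset.sum_congr rfl fun a ha => ?_
      simp only [Finset.mem_range] at ha
      rw [hf_smul hhf]
      have e1 : a + (c+1) = (c+a)+1 := by omega
      have e2 : s - c - a = s - (c+a) := by omega
      rw [e1, e2]
    rw [Finset.sum_congr rfl expand, Finset.sum_add_distrib]
    have hS1 : (∑ c ∈ Finset.range (s+1), ∑ a ∈ Finset.range (s+1-c),
        xt f' a • xt h' (c+1) • Tg f' w r (s - c - a))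
        = ∑ a ∈ Finset.range (s+2),
            ((-2 : ℂ) * ((s+1-a : ℕ) : ℂ)) • xt f' a • Tg f' w r (s+1-a) := by
      rw [tri_swap s (fun c a => xt f' a • xt h' (c+1) • Tg f' w r (s - c - a))]
      have step : ∀ a ∈ Finset.range (s+1),
          (∑ c ∈ Finset.range (s+1-a), xt f' a • xt h' (c+1) • Tg f' w r (s - c - a))
            = ((-2 : ℂ) * ((s+1-a : ℕ) : ℂ)) • xt f' a • Tg f' w r (s+1-a) := by
        intro a ha
        simp only [Finset.mem_range] at ha
        have hr2 : s + 1 - a = (s - a) + 1 := by omega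
        rw [hr2]
        have heq : ∀ c ∈ Finset.range ((s-a)+1),
            xt f' a • xt h' (c+1) • Tg f' w r (s - c - a)
            = xt f' a • xt h' (c+1) • Tg f' w r ((s - a) - c) := by
          intro c _
          have : s - c - a = s - a - c := by omega
          rw [this]
        rw [Finset.sum_congr rfl heq, ← Finset.smul_sum, ih (s-a), csmul_comm]
        congr 2
        push_cast [Nat.sub_add_cancel]
        ring
      rw [Finset.sum_congr rfl step]
      have hlast : ((-2 : ℂ) * ((s+1-(s+1) : ℕ) : ℂ)) • xt f' (s+1) • Tg f' w r (s+1-(s+1)) = 0 := by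
        simp
      conv_rhs => rw [Finset.sum_range_succ]
      rw [hlast, add_zero]
    have hS2 : (∑ c ∈ Finset.range (s+1), ∑ a ∈ Finset.range (s+1-c),
        (-2 : ℂ) • xt f' ((c + a) + 1) • Tg f' w r (s - (c + a)))
        = ∑ a ∈ Finset.range (s+2),
            ((-2 : ℂ) * ((a : ℕ) : ℂ)) • xt f' a • Tg f' w r (s+1-a) := by
      rw [tri_diag s (fun m => (-2 : ℂ) • xt f' (m + 1) • Tg f' w r (s - m))]
      rw [Finset.sum_range_succ' (fun a => ((-2 : ℂ) * ((a : ℕ) : ℂ)) • xt f' a • Tg f' w r (s+1-a)) (s+1)]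
      have h0 : ((-2 : ℂ) * ((0 : ℕ) : ℂ)) • xt f' 0 • Tg f' w r (s+1-0) = 0 := by simp
      rw [h0, add_zero]
      refine Finset.sum_congr rfl fun m hm => ?_
      simp only [Finset.mem_range] at hm
      have : s + 1 - (m+1) = s - m := by omega
      rw [this]
      rw [← Nat.cast_smul_eq_nsmul ℂ (m+1), smul_smul]
      congr 1
      push_cast
      ring
    rw [hS1, hS2, ← Finset.sum_add_distrib, Tg_succ, Finset.smul_sum]
    refine Finset.sum_congr rfl fun a ha => ?_
    simp only [Finset.mem_range] at ha
    rw [← add_smul]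
    congr 1
    rw [Nat.cast_sub (by omega)]
    push_cast
    ring
end Aux2

section Aux3
set_option linter.unusedSectionVars false

variable {L : Type} [LieRing L] [LieAlgebra ℂ L]
variable {M : Type} [AddCommGroup M] [Module ℂ M] [Module (UCA L) M]
  [IsScalarTower ℂ (UCA L) M]
variable {e' f' h' : L} {w : M}

/-- symmetrization lemma -/
lemma sy_sum : ∀ r q : ℕ,
    ((r : ℂ) + 1) • (∑ a ∈ Finset.range (q+1), ((a : ℕ) : ℂ) • xt f' a • Tg f' w r (q - a))
      = ((q : ℕ) : ℂ) • Tg f' w (r+1) q := by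
  intro r
  induction r with
  | zero =>
    intro q
    rw [Finset.sum_eq_single q]
    · rw [Tg_one]
      have : q - q = 0 := by omega
      simp [Tg, this]
    · intro b hb hbq
      simp only [Finset.mem_range] at hb
      have : q - b ≠ 0 := by omega
      simp [Tg, this]
    · intro h
      exact absurd (Finset.self_mem_range_succ q) h
  | succ r ih =>
    intro q
    set U' := ∑ a ∈ Finset.range (q+1), ((a : ℕ) : ℂ) • xt f' a • Tg f' w (r+1) (q - a) with hU'
    have hD : U' = ∑ a ∈ Finset.range (q+1), ∑ b ∈ Finset.range (q+1-a),
        ((a : ℕ) : ℂ) • xt f' a • xt f' b • Tg f' w r (q - a - b) := by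
      rw [hU']
      refine Finset.sum_congr rfl fun a ha => ?_
      simp only [Finset.mem_range] at ha
      have hr : q - a + 1 = q + 1 - a := by omega
      rw [Tg_succ, ← hr, Finset.smul_sum, Finset.smul_sum]
    have hswap : U' = ∑ a ∈ Finset.range (q+1), ∑ b ∈ Finset.range (q+1-a),
        ((b : ℕ) : ℂ) • xt f' a • xt f' b • Tg f' w r (q - a - b) := by
      rw [hD, tri_swap q (fun c a => ((c : ℕ) : ℂ) • xt f' c • xt f' a • Tg f' w r (q - c - a))]
      refine Finset.sum_congr rfl fun a ha => Finset.sum_congr rfl fun b hb => ?_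
      rw [ff_smul]
      have : q - b - a = q - a - b := by omega
      rw [this]
    have hinner : ((r : ℂ) + 1) • U'
        = ∑ a ∈ Finset.range (q+1), ((q - a : ℕ) : ℂ) • xt f' a • Tg f' w (r+1) (q - a) := by
      rw [hswap, Finset.smul_sum]
      refine Finset.sum_congr rfl fun a ha => ?_
      simp only [Finset.mem_range] at ha
      have pull : ∀ b ∈ Finset.range (q+1-a),
          ((b : ℕ) : ℂ) • xt f' a • xt f' b • Tg f' w r (q - a - b)
            = xt f' a • ((b : ℕ) : ℂ) • xt f' b • Tg f' w r ((q - a) - b) := by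
        intro b hb
        rw [csmul_comm]
      have hr : q + 1 - a = (q - a) + 1 := by omega
      rw [Finset.sum_congr rfl pull, ← Finset.smul_sum, ← csmul_comm, hr, ih (q - a),
        csmul_comm]
    have goal2 : (((r:ℕ)+1 : ℂ) + 1) • U' = ((q : ℕ) : ℂ) • Tg f' w (r+2) q := by
      have e1 : (((r:ℕ)+1 : ℂ) + 1) • U' = ((r : ℂ) + 1) • U' + U' := by
        push_cast
        rw [add_smul, one_smul]
      rw [e1, hinner, hU', ← Finset.sum_add_distrib]
      have term : ∀ a ∈ Finset.range (q+1),
          ((q - a : ℕ) : ℂ) • xt f' a • Tg f' w (r+1) (q - a)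
            + ((a : ℕ) : ℂ) • xt f' a • Tg f' w (r+1) (q - a)
          = ((q : ℕ) : ℂ) • xt f' a • Tg f' w (r+1) (q - a) := by
        intro a ha
        simp only [Finset.mem_range] at ha
        rw [← add_smul]
        congr 1
        rw [Nat.cast_sub (by omega)]
        ring
      rw [Finset.sum_congr rfl term, ← Finset.smul_sum, ← Tg_succ]
    convert goal2 using 2
    push_cast
    ring
end Aux3

section Aux4
set_option linter.unusedSectionVars false

variable {L : Type} [LieRing L] [LieAlgebra ℂ L]
variable {M : Type} [AddCommGroup M] [Module ℂ M] [Module (UCA L) M]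
  [IsScalarTower ℂ (UCA L) M]
variable {e' f' h' : L} {w : M}

/-- the key lemma: `e` lowers `Tg (r+1) s` to `Tg r (s+1)` -/
lemma el_step (hef : ⁅e', f'⁆ = h') (hhf : ⁅h', f'⁆ = -(2 • f'))
    (hwe : xt e' 1 • w = 0) (hwh : ∀ k, k ≠ 0 → xt h' k • w = 0) :
    ∀ r s : ℕ, xt e' 1 • Tg f' w (r+1) s
      = (-(((r : ℕ) : ℂ) + 1) * (((s : ℕ) : ℂ) + 1)) • Tg f' w r (s+1) := by
  intro r
  induction r with
  | zero =>
    intro s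
    rw [Tg_one, ef_smul hef, hwe, smul_zero, hwh (s+1) (Nat.succ_ne_zero s), zero_add]
    have : Tg f' w 0 (s+1) = 0 := by simp [Tg]
    rw [this, smul_zero]
  | succ r ih =>
    intro s
    have expand : xt e' 1 • Tg f' w (r+2) s
        = (∑ a ∈ Finset.range (s+1),
            xt f' a • xt e' 1 • Tg f' w (r+1) (s - a))
          + ∑ a ∈ Finset.range (s+1), xt h' (a+1) • Tg f' w (r+1) (s - a) := by
      rw [Tg_succ, Finset.smul_sum, ← Finset.sum_add_distrib]
      exact Finset.sum_congr rfl fun a ha => ef_smul hef _ a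
    rw [expand, hl_sum hhf hwh (r+1) s]
    have hfirst : (∑ a ∈ Finset.range (s+1),
        xt f' a • xt e' 1 • Tg f' w (r+1) (s - a))
        = ∑ a ∈ Finset.range (s+2),
            (-(((r : ℕ) : ℂ) + 1) * ((s+1-a : ℕ) : ℂ)) • xt f' a • Tg f' w r (s+1-a) := by
      have step : ∀ a ∈ Finset.range (s+1),
          xt f' a • xt e' 1 • Tg f' w (r+1) (s - a)
            = (-(((r : ℕ) : ℂ) + 1) * ((s+1-a : ℕ) : ℂ)) • xt f' a • Tg f' w r (s+1-a) := by
        intro a ha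
        simp only [Finset.mem_range] at ha
        have hr : s + 1 - a = (s - a) + 1 := by omega
        rw [ih (s-a), csmul_comm, hr]
        congr 2
        push_cast
        rw [Nat.cast_sub (by omega : a ≤ s)]
      rw [Finset.sum_congr rfl step]
      conv_rhs => rw [Finset.sum_range_succ]
      have : (-(((r : ℕ) : ℂ) + 1) * ((s+1-(s+1) : ℕ) : ℂ)) •
          xt f' (s+1) • Tg f' w r (s+1-(s+1)) = 0 := by
        simp
      rw [this, add_zero]
    rw [hfirst]
    have split : ∀ a ∈ Finset.range (s+2),
        (-(((r : ℕ) : ℂ) + 1) * ((s+1-a : ℕ) : ℂ)) • xt f' a • Tg f' w r (s+1-a)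
          = (-(((r : ℕ) : ℂ) + 1) * (((s+1 : ℕ)) : ℂ)) • xt f' a • Tg f' w r (s+1-a)
            + ((((r : ℕ) : ℂ) + 1)) • ((a : ℕ) : ℂ) • xt f' a • Tg f' w r ((s+1)-a) := by
      intro a ha
      simp only [Finset.mem_range] at ha
      rw [smul_smul, ← add_smul]
      congr 1
      rw [Nat.cast_sub (by omega)]
      push_cast
      ring
    rw [Finset.sum_congr rfl split, Finset.sum_add_distrib, ← Finset.smul_sum,
      ← Finset.smul_sum, ← Tg_succ, sy_sum r (s+1)]
    rw [← add_smul, ← add_smul]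
    congr 1
    push_cast
    ring

/-- the Garland constant -/
def garlandC : ℕ → ℕ → ℕ → ℂ
  | 0, _, _ => 1
  | (j+1), r, s => (-(((r+j : ℕ) : ℂ) + 1) * (((s : ℕ) : ℂ) + 1)) * garlandC j r (s+1)

lemma garlandC_ne_zero : ∀ j r s, garlandC j r s ≠ 0 := by
  intro j
  induction j with
  | zero => intro r s; simp [garlandC]
  | succ j ih =>
    intro r s
    simp only [garlandC]
    have key : ∀ n : ℕ, ((n : ℂ) + 1) ≠ 0 := by
      intro n
      have h1 : (((n+1 : ℕ)) : ℂ) ≠ 0 := Nat.cast_ne_zero.mpr (Nat.succ_ne_zero n)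
      push_cast at h1
      exact h1
    exact mul_ne_zero (mul_ne_zero (neg_ne_zero.mpr (key _)) (key _)) (ih r (s+1))

/-- iterated Garland lemma -/
lemma el_iter (hef : ⁅e', f'⁆ = h') (hhf : ⁅h', f'⁆ = -(2 • f'))
    (hwe : xt e' 1 • w = 0) (hwh : ∀ k, k ≠ 0 → xt h' k • w = 0) :
    ∀ j r s : ℕ, (xt e' 1) ^ j • Tg f' w (r+j) s = garlandC j r s • Tg f' w r (s+j) := by
  intro j
  induction j with
  | zero => intro r s; simp [garlandC]
  | succ j ih =>
    intro r s
    have h0 : (xt e' 1) ^ (j+1) • Tg f' w (r+(j+1)) s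
        = (xt e' 1) ^ j • (xt e' 1 • Tg f' w ((r+j)+1) s) := by
      have : r + (j+1) = r + j + 1 := by omega
      rw [pow_succ, mul_smul, this]
    have hidx : s + 1 + j = s + (j+1) := by omega
    rw [h0, el_step hef hhf hwe hwh (r+j) s, csmul_comm, ih r (s+1), smul_smul, hidx]
    rfl
end Aux4

section Aux5
set_option linter.unusedSectionVars false

variable {L : Type} [LieRing L] [LieAlgebra ℂ L]
variable {M : Type} [AddCommGroup M] [Module ℂ M] [Module (UCA L) M]
  [IsScalarTower ℂ (UCA L) M]
variable {e' f' h' : L} {w : M}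

lemma mem_of_csmul_mem (P : Submodule (UCA L) M) {c : ℂ} (hc : c ≠ 0) {x : M}
    (h : c • x ∈ P) : x ∈ P := by
  have h2 := Submodule.smul_of_tower_mem P c⁻¹ h
  rwa [smul_smul, inv_mul_cancel₀ hc, one_smul] at h2

lemma eq_zero_of_csmul_eq_zero {c : ℂ} (hc : c ≠ 0) {x : M} (h : c • x = 0) : x = 0 := by
  have h2 : c⁻¹ • c • x = (0 : M) := by rw [h, smul_zero]
  rwa [smul_smul, inv_mul_cancel₀ hc, one_smul] at h2

lemma f_smul_Tg_mem (P : Submodule (UCA L) M) {a : ℕ} (hfa : xt f' a • w ∈ P) :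
    ∀ r q, xt f' a • Tg f' w r q ∈ P := by
  intro r
  induction r with
  | zero =>
    intro q
    by_cases h : q = 0
    · simpa [Tg, h] using hfa
    · simp [Tg, h]
  | succ r ih =>
    intro q
    rw [Tg_succ, Finset.smul_sum]
    refine Submodule.sum_mem _ fun b hb => ?_
    rw [ff_smul]
    exact Submodule.smul_mem _ _ (ih (q - b))

lemma Tg_mem (P : Submodule (UCA L) M) (sA : ℕ)
    (hgen : ∀ j, sA ≤ j → xt f' j • w ∈ P) :
    ∀ r s, r * (sA - 1) + 1 ≤ s → Tg f' w r s ∈ P := by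
  intro r
  induction r with
  | zero =>
    intro s hs
    have : s ≠ 0 := by omega
    simp [Tg, this]
  | succ r ih =>
    intro s hs
    rw [Tg_succ]
    refine Submodule.sum_mem _ fun a ha => ?_
    simp only [Finset.mem_range] at ha
    obtain ⟨X, hX⟩ : ∃ X, r * (sA - 1) = X := ⟨_, rfl⟩
    rw [add_mul, one_mul, hX] at hs
    by_cases hc : X + 1 ≤ s - a
    · exact Submodule.smul_mem _ _ (ih (s - a) (by rw [hX]; exact hc))
    · exact f_smul_Tg_mem P (hgen a (by omega)) r (s - a)

lemma f_bump (hhf : ⁅h', f'⁆ = -(2 • f')) (hwh : ∀ k, k ≠ 0 → xt h' k • w = 0)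
    (b c : ℕ) (hc : c ≠ 0) :
    xt f' (b + c) • w = (-(1/2) : ℂ) • (xt h' c • (xt f' b • w)) := by
  have h1 := hf_smul hhf w c b
  rw [hwh c hc, smul_zero, zero_add] at h1
  rw [h1, smul_smul]
  norm_num

lemma f_bump_mem (P : Submodule (UCA L) M) (hhf : ⁅h', f'⁆ = -(2 • f'))
    (hwh : ∀ k, k ≠ 0 → xt h' k • w = 0) (b : ℕ) (hb : xt f' b • w ∈ P) :
    ∀ j, b ≤ j → xt f' j • w ∈ P := by
  intro j hj
  obtain ⟨c, rfl⟩ := Nat.exists_eq_add_of_le hj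
  rcases Nat.eq_zero_or_pos c with hc | hc
  · simpa [hc] using hb
  · rw [f_bump hhf hwh b c (by omega)]
    exact Submodule.smul_of_tower_mem _ _ (Submodule.smul_mem _ _ hb)
end Aux5

section Aux6
set_option linter.unusedSectionVars false

variable {L : Type} [LieRing L] [LieAlgebra ℂ L] {Φ ιI : Type}
variable (ep em hc : Φ → L) (simple : ιI → Φ) (lam : Module.Dual ℂ L) (lamNat : Φ → ℕ)

lemma wLam_e_smul (α : Φ) (k : ℕ) :
    xt (ep α) k • wLam ep em hc simple lam lamNat = 0 := by
  have hmem : xt (ep α) k ∈ Submodule.span (UCA L) (weylGens ep em hc simple lam lamNat) := by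
    refine Submodule.subset_span ?_
    left; left
    exact ⟨ep α, Submodule.subset_span (Set.mem_range_self α), k, rfl⟩
  rw [wLam, ← Submodule.Quotient.mk_smul, smul_eq_mul, mul_one]
  exact (Submodule.Quotient.mk_eq_zero _).mpr hmem

lemma wLam_h_smul (α : Φ) (k : ℕ) (hk : k ≠ 0) :
    xt (hc α) k • wLam ep em hc simple lam lamNat = 0 := by
  have hmem : xt (hc α) k ∈ Submodule.span (UCA L) (weylGens ep em hc simple lam lamNat) := by
    refine Submodule.subset_span ?_
    left; right
    refine ⟨hc α, Submodule.subset_span (Set.mem_range_self α), k, ?_⟩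
    rw [if_neg hk, zero_smul, sub_zero]
  rw [wLam, ← Submodule.Quotient.mk_smul, smul_eq_mul, mul_one]
  exact (Submodule.Quotient.mk_eq_zero _).mpr hmem

lemma tailSum_xi (d sA m k : ℕ) :
    tailSum (fun j => if j + 1 < sA then d else if j + 1 = sA then m else 0) k
      = (sA - 1 - k) * d + (if k < sA then m else 0) := by
  set p : ℕ → ℕ := fun j => if j + 1 < sA then d else if j + 1 = sA then m else 0 with hp
  have h1 : tailSum p k = ∑ j ∈ Finset.Ico k sA, p j := by
    apply finsum_mem_eq_sum_of_inter_support_eq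
    ext j
    simp only [Set.mem_inter_iff, Set.mem_setOf_eq, Function.mem_support, Finset.coe_Ico,
      Set.mem_Ico]
    constructor
    · rintro ⟨hkj, hpj⟩
      refine ⟨⟨hkj, ?_⟩, hpj⟩
      by_contra hj
      push_neg at hj
      apply hpj
      show (if j + 1 < sA then d else if j + 1 = sA then m else 0) = 0
      rw [if_neg (by omega), if_neg (by omega)]
    · rintro ⟨⟨hkj, _⟩, hpj⟩; exact ⟨hkj, hpj⟩
  rw [h1]
  rcases Nat.lt_or_ge k sA with hk | hk
  · rw [if_pos hk]
    have hsa : sA = (sA - 1) + 1 := by omega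
    rw [hsa, Finset.sum_Ico_succ_top (by omega : k ≤ sA - 1)]
    have hlast : p (sA - 1) = m := by
      show (if (sA-1) + 1 < sA then d else if (sA-1) + 1 = sA then m else 0) = m
      rw [if_neg (by omega), if_pos (by omega)]
    have hbody : ∀ j ∈ Finset.Ico k (sA - 1), p j = d := by
      intro j hj
      simp only [Finset.mem_Ico] at hj
      show (if j + 1 < sA then d else if j + 1 = sA then m else 0) = d
      rw [if_pos (by omega)]
    rw [hlast, Finset.sum_congr rfl hbody, Finset.sum_const, Nat.card_Ico, smul_eq_mul]
    have heq : sA - 1 + 1 - 1 - k = sA - 1 - k := by omega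
    rw [heq]
  · rw [if_neg (by omega)]
    rw [Finset.Ico_eq_empty (by omega), Finset.sum_empty]
    have : sA - 1 - k = 0 := by omega
    rw [this, zero_mul, add_zero]

lemma arith_case (s r k sA d m : ℕ) (hs : 1 ≤ s) (hr : 1 ≤ r) (hk : 1 ≤ k)
    (hsA : 1 ≤ sA) (hm1 : 1 ≤ m) (hmd : m ≤ d) (hd3 : d ≤ 3)
    (hcond : 1 + r * k + ((sA - 1 - k) * d + (if k < sA then m else 0)) ≤ s + r)
    (hN : s + r ≤ (sA - 1) * d + m)
    (hs2 : s ≤ r * (sA - 1)) :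
    d = 3 ∧ m = 1 ∧ r = 2 ∧ s = 2 * (sA - 1) ∧ 2 ≤ sA := by
  have hksA : k < sA := by
    by_contra hkk
    push_neg at hkk
    rw [(by omega : sA - 1 - k = 0), if_neg (by omega), zero_mul] at hcond
    have h2 : r * sA ≤ r * k := Nat.mul_le_mul_left r hkk
    have h3 : r * sA = r * (sA - 1) + r := by
      have h4 : r * sA = r * ((sA - 1) + 1) := by rw [← (by omega : sA = (sA - 1) + 1)]
      rw [h4]; ring
    linarith
  rw [if_pos hksA] at hcond
  set σ := sA - 1 with hσdef
  set jm1 := σ - k with hjdef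
  have hσ : σ = k + jm1 := by omega
  rw [hσ] at hN hs2
  rw [add_mul] at hN
  rw [mul_add] at hs2
  -- hcond : 1 + r*k + (jm1*d + m) ≤ s + r
  -- hN : s + r ≤ k*d + jm1*d + m
  -- hs2 : s ≤ r*k + r*jm1
  have hrd : r < d := by
    by_contra hdr
    push_neg at hdr
    have h2 : k * d ≤ k * r := Nat.mul_le_mul_left k hdr
    have h3 : k * r = r * k := Nat.mul_comm k r
    linarith
  have p1 : jm1 * (r + 1) ≤ jm1 * d := Nat.mul_le_mul_left jm1 (by omega)
  have e3 : jm1 * (r + 1) = r * jm1 + jm1 := by ring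
  have hbig : 1 + jm1 + m ≤ r := by linarith
  have hr2 : r = 2 := by omega
  have hd2 : d = 3 := by omega
  have hjm : jm1 = 0 := by omega
  have hm : m = 1 := by omega
  subst hr2; subst hd2; subst hm
  rw [hjm] at hσ hcond hs2
  refine ⟨rfl, rfl, rfl, by omega, by omega⟩
end Aux6

set_option maxHeartbeats 2000000 in
/-- Proposition `second`.  For nonzero `λ ∈ P⁺`, the module `V(ξ(1,λ))` is
isomorphic to the quotient of the local Weyl module by the submodule generated by the elements
`(x_α⁻ ⊗ t^{s_α}) w_λ` for `α ∈ R⁺` with `d_α > 1` and the elements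
`(x_α⁻ ⊗ t^{s_α−1})² w_λ` for `α ∈ R⁺` with `d_α = 3` and `m_α = 1`.  In particular, if `𝔤`
is simply laced then `W_loc(λ) ≅ V(ξ(1,λ))`. -/
theorem VXi_levelOne_iso_quotient_and_simplyLaced_weyl
    {L : Type} [LieRing L] [LieAlgebra ℂ L] {Φ ιI : Type}
    (ep em hc : Φ → L) (simple : ιI → Φ)
    (lam : Module.Dual ℂ L) (lamNat : Φ → ℕ)
    -- the elements `x_α⁺, x_α⁻, h_α` form an `sl₂`-triple for each positive root `α`
    (htriple : ∀ α, IsSl2Triple (hc α) (ep α) (em α))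
    -- `λ(h_α) = lamNat α` is a non-negative integer for every `α ∈ R⁺`, i.e. `λ ∈ P⁺`
    (hlam : ∀ α, lam (hc α) = (lamNat α : ℂ))
    -- `λ ≠ 0`
    (hlam_ne : lam ≠ 0)
    -- the relation `(x_α⁻ ⊗ 1)^{λ(h_α)+1} w_λ = 0`, which holds in `W_loc(λ)` by
    -- finite-dimensionality of the local Weyl module
    (hintega : ∀ α, (xt (em α) 0) ^ (lamNat α + 1) • wLam ep em hc simple lam lamNat = 0)
    -- `d_α = 2/(α,α) ∈ {1,2,3}`
    (d : Φ → ℕ) (hd : ∀ α, 1 ≤ d α ∧ d α ≤ 3)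
    -- `s_α, m_α`: the unique integers with `λ(h_α) = (s_α−1) d_α + m_α`, `0 < m_α ≤ d_α`
    (sα mα : Φ → ℕ)
    (hsm : ∀ α, (0 < lamNat α →
        1 ≤ sα α ∧ lamNat α = (sα α - 1) * d α + mα α ∧ 0 < mα α ∧ mα α ≤ d α) ∧
      (lamNat α = 0 → sα α = 0 ∧ mα α = 0))
    -- `ξ(1,λ)`: the tuple of partitions `ξ^α = (d_α^{s_α−1}, m_α)`
    (ξ : Φ → ℕ → ℕ)
    (hξ : ξ = fun α j => if j + 1 < sα α then d α else if j + 1 = sα α then mα α else 0) :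
    Nonempty
      (VXi ep em hc simple lam lamNat ξ ≃ₗ[UCA L]
        Wloc ep em hc simple lam lamNat ⧸
          Submodule.span (UCA L)
            {v | (∃ α : Φ, 1 < d α ∧
                    v = xt (em α) (sα α) • wLam ep em hc simple lam lamNat) ∨
                 (∃ α : Φ, d α = 3 ∧ mα α = 1 ∧
                    v = (xt (em α) (sα α - 1)) ^ 2 • wLam ep em hc simple lam lamNat)}) ∧
    ((∀ α, d α = 1) →
      Nonempty
        (Wloc ep em hc simple lam lamNat ≃ₗ[UCA L] VXi ep em hc simple lam lamNat ξ)) := by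
  subst hξ
  set w : Wloc ep em hc simple lam lamNat := wLam ep em hc simple lam lamNat with hwdef
  set KK := Submodule.span (UCA L) (xiGens ep em hc simple lam lamNat
    (fun α j => if j + 1 < sα α then d α else if j + 1 = sα α then mα α else 0)) with hKK
  set QQ := Submodule.span (UCA L)
    {v | (∃ α : Φ, 1 < d α ∧ v = xt (em α) (sα α) • w) ∨
         (∃ α : Φ, d α = 3 ∧ mα α = 1 ∧ v = (xt (em α) (sα α - 1)) ^ 2 • w)} with hQQ
  have hef : ∀ α, ⁅ep α, em α⁆ = hc α := fun α => (htriple α).lie_e_f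
  have hhf : ∀ α, ⁅hc α, em α⁆ = -(2 • em α) := fun α => (htriple α).lie_h_f_nsmul
  have hwe : ∀ α (k : ℕ), xt (ep α) k • w = 0 := fun α k =>
    wLam_e_smul ep em hc simple lam lamNat α k
  have hwh : ∀ α (k : ℕ), k ≠ 0 → xt (hc α) k • w = 0 := fun α k hk =>
    wLam_h_smul ep em hc simple lam lamNat α k hk
  have hpow : ∀ α (n : ℕ), lamNat α + 1 ≤ n → (xt (em α) 0) ^ n • w = 0 := by
    intro α n hn
    have h1 : (xt (em α) 0) ^ n
        = (xt (em α) 0) ^ (n - (lamNat α + 1)) * (xt (em α) 0) ^ (lamNat α + 1) := by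
      rw [← pow_add]
      congr 1
      omega
    rw [h1, mul_smul, hintega α, smul_zero]
  have hgar : ∀ α (j r s : ℕ), (xt (ep α) 1) ^ j • Tg (em α) w (r + j) s
      = garlandC j r s • Tg (em α) w r (s + j) := fun α =>
    el_iter (hef α) (hhf α) (hwe α 1) (hwh α)
  have hfj0 : ∀ α (j : ℕ), lamNat α ≤ j → xt (em α) j • w = 0 := by
    intro α j hj
    have h1 := hgar α j 1 0
    rw [Tg_zero_right, hpow α (1 + j) (by omega), smul_zero, zero_add, Tg_one] at h1
    exact eq_zero_of_csmul_eq_zero (garlandC_ne_zero j 1 0) h1.symm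
  have hXmem : ∀ α (s r : ℕ), 1 ≤ s → 1 ≤ r →
      (∃ k, 1 ≤ k ∧ s + r ≥ 1 + r * k +
        tailSum (fun j => if j + 1 < sα α then d α else if j + 1 = sα α then mα α else 0) k) →
      (xt (ep α) 1 ^ s * xt (em α) 0 ^ (s + r)) • w ∈ KK := by
    intro α s r h1 h2 h3
    exact Submodule.subset_span ⟨α, s, r, h1, h2, h3, rfl⟩
  have hXval : ∀ α (s r : ℕ), (xt (ep α) 1 ^ s * xt (em α) 0 ^ (s + r)) • w
      = garlandC s r 0 • Tg (em α) w r s := by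
    intro α s r
    rw [mul_smul, (by omega : s + r = r + s), ← Tg_zero_right, hgar α s r 0, zero_add]
  have hfsaK : ∀ α, xt (em α) (sα α) • w ∈ KK := by
    intro α
    by_cases hN : lamNat α = 0
    · have hs0 : sα α = 0 := ((hsm α).2 hN).1
      have h1 : xt (em α) 0 • w = 0 := by
        have h2 := hintega α
        rw [hN, pow_one] at h2
        exact h2
      rw [hs0, h1]
      exact zero_mem _
    · have hs1 : 1 ≤ sα α := ((hsm α).1 (by omega)).1
      have hX := hXmem α (sα α) 1 hs1 le_rfl ⟨sα α, hs1, by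
        simp only [tailSum_xi]
        rw [(by omega : sα α - 1 - sα α = 0), if_neg (by omega), zero_mul, zero_add]
        omega⟩
      rw [hXval α (sα α) 1] at hX
      have h2 := mem_of_csmul_mem KK (garlandC_ne_zero (sα α) 1 0) hX
      rwa [Tg_one] at h2
  have hfjK : ∀ α (j : ℕ), sα α ≤ j → xt (em α) j • w ∈ KK := fun α =>
    f_bump_mem KK (hhf α) (hwh α) (sα α) (hfsaK α)
  have hfjQ : ∀ α (j : ℕ), sα α ≤ j → xt (em α) j • w ∈ QQ := by
    intro α j hj
    by_cases hd1 : d α = 1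
    · have hNj : lamNat α ≤ j := by
        by_cases hN : lamNat α = 0
        · omega
        · obtain ⟨hs1, hNf, hm1, hmd⟩ := (hsm α).1 (by omega)
          rw [hd1, mul_one] at hNf
          omega
      rw [hfj0 α j hNj]
      exact zero_mem _
    · have hbase : xt (em α) (sα α) • w ∈ QQ :=
        Submodule.subset_span (Or.inl ⟨α, by rcases hd α with ⟨h1, h2⟩; omega, rfl⟩)
      exact f_bump_mem QQ (hhf α) (hwh α) (sα α) hbase j hj
  have hKQ : KK = QQ := by
    apply le_antisymm
    · rw [hKK, Submodule.span_le]
      rintro v ⟨α, s, r, hs, hr, ⟨k, hk, hcond⟩, rfl⟩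
      simp only [tailSum_xi] at hcond
      show (xt (ep α) 1 ^ s * xt (em α) 0 ^ (s + r)) • w ∈ QQ
      by_cases hbig : lamNat α + 1 ≤ s + r
      · rw [mul_smul, hpow α (s + r) hbig, smul_zero]
        exact zero_mem _
      · obtain ⟨hs1, hNf, hm1, hmd⟩ := (hsm α).1 (by omega)
        by_cases hc2 : r * (sα α - 1) + 1 ≤ s
        · rw [hXval α s r]
          exact Submodule.smul_of_tower_mem _ _ (Tg_mem QQ (sα α) (hfjQ α) r s hc2)
        · push_neg at hc2
          obtain ⟨hd3, hm1', hr2, hs2σ, hsA2⟩ := arith_case s r k (sα α) (d α) (mα α)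
            hs hr hk hs1 hm1 hmd (hd α).2 hcond (by rw [← hNf]; omega)
            (Nat.lt_succ_iff.mp hc2)
          subst hr2
          have hfsq : xt (em α) (sα α - 1) • (xt (em α) (sα α - 1) • w) ∈ QQ := by
            have hmem : (xt (em α) (sα α - 1)) ^ 2 • w ∈ QQ :=
              Submodule.subset_span (Or.inr ⟨α, hd3, hm1', rfl⟩)
            rwa [pow_two, mul_smul] at hmem
          have hT2 : Tg (em α) w 2 (2 * (sα α - 1)) ∈ QQ := by
            rw [Tg_succ]
            refine Submodule.sum_mem _ fun a ha => ?_
            simp only [Finset.mem_range] at ha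
            rw [Tg_one]
            rcases lt_trichotomy a (sα α - 1) with h | h | h
            · exact Submodule.smul_mem _ _ (hfjQ α (2 * (sα α - 1) - a) (by omega))
            · rw [h, (by omega : 2 * (sα α - 1) - (sα α - 1) = sα α - 1)]
              exact hfsq
            · rw [ff_smul]
              exact Submodule.smul_mem _ _ (hfjQ α a (by omega))
          rw [hXval α s 2, hs2σ]
          exact Submodule.smul_of_tower_mem _ _ hT2
    · rw [hQQ, Submodule.span_le]
      rintro v hv
      simp only [Set.mem_setOf_eq] at hv
      rcases hv with ⟨α, hd2, rfl⟩ | ⟨α, hd3, hm1, rfl⟩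
      · exact hfjK α (sα α) le_rfl
      · show (xt (em α) (sα α - 1)) ^ 2 • w ∈ KK
        by_cases hN : lamNat α = 0
        · have hs0 : sα α = 0 := ((hsm α).2 hN).1
          have h1 : xt (em α) 0 • w = 0 := by
            have h2 := hintega α
            rw [hN, pow_one] at h2
            exact h2
          rw [hs0, (by omega : (0:ℕ) - 1 = 0), pow_two, mul_smul, h1, smul_zero]
          exact zero_mem _
        · obtain ⟨hs1, hNf, hm1'', hmd⟩ := (hsm α).1 (by omega)
          by_cases hsa1 : sα α = 1
          · have hN1 : lamNat α = 1 := by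
              rw [hNf, hsa1, hm1]
              omega
            rw [hsa1, (by omega : (1:ℕ) - 1 = 0)]
            have h0 := hpow α 2 (by omega)
            rw [h0]
            exact zero_mem _
          · have hσ1 : 1 ≤ sα α - 1 := by omega
            have hX := hXmem α (2 * (sα α - 1)) 2 (by omega) (by omega) ⟨sα α - 1, hσ1, by
              simp only [tailSum_xi]
              rw [(by omega : sα α - 1 - (sα α - 1) = 0), if_pos (by omega), zero_mul, hm1,
                zero_add]
              omega⟩
            rw [hXval α (2 * (sα α - 1)) 2] at hX
            have hT2K : Tg (em α) w 2 (2 * (sα α - 1)) ∈ KK :=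
              mem_of_csmul_mem KK (garlandC_ne_zero _ _ _) hX
            have hexp : Tg (em α) w 2 (2 * (sα α - 1))
                = xt (em α) (sα α - 1) • (xt (em α) (sα α - 1) • w)
                  + ∑ a ∈ (Finset.range (2 * (sα α - 1) + 1)).erase (sα α - 1),
                      xt (em α) a • (xt (em α) (2 * (sα α - 1) - a) • w) := by
              rw [Tg_succ, Finset.sum_congr rfl (fun a _ => by rw [Tg_one]),
                ← Finset.add_sum_erase _ _ (Finset.mem_range.mpr (by omega : sα α - 1 < 2 * (sα α - 1) + 1)),
                (by omega : 2 * (sα α - 1) - (sα α - 1) = sα α - 1)]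
            have herase : ∑ a ∈ (Finset.range (2 * (sα α - 1) + 1)).erase (sα α - 1),
                xt (em α) a • (xt (em α) (2 * (sα α - 1) - a) • w) ∈ KK := by
              refine Submodule.sum_mem _ fun a ha => ?_
              obtain ⟨hane, harange⟩ := Finset.mem_erase.mp ha
              simp only [Finset.mem_range] at harange
              rcases lt_or_gt_of_ne hane with h | h
              · exact Submodule.smul_mem _ _ (hfjK α (2 * (sα α - 1) - a) (by omega))
              · rw [ff_smul]
                exact Submodule.smul_mem _ _ (hfjK α a (by omega))
            have hmain : xt (em α) (sα α - 1) • (xt (em α) (sα α - 1) • w) ∈ KK := by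
              have h5 : xt (em α) (sα α - 1) • (xt (em α) (sα α - 1) • w)
                  = Tg (em α) w 2 (2 * (sα α - 1))
                    - ∑ a ∈ (Finset.range (2 * (sα α - 1) + 1)).erase (sα α - 1),
                        xt (em α) a • (xt (em α) (2 * (sα α - 1) - a) • w) := by
                rw [hexp]
                exact (add_sub_cancel_right _ _).symm
              rw [h5]
              exact Submodule.sub_mem _ hT2K herase
            rwa [← mul_smul, ← pow_two] at hmain
  constructor
  · exact ⟨Submodule.quotEquivOfEq _ _ hKQ⟩
  · intro hall
    have hQbot : QQ = ⊥ := by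
      rw [hQQ, Submodule.span_eq_bot]
      rintro v hv
      simp only [Set.mem_setOf_eq] at hv
      rcases hv with ⟨α, hdd, _⟩ | ⟨α, hdd, _, _⟩
      · have := hall α
        omega
      · have := hall α
        omega
    exact ⟨(Submodule.quotEquivOfEqBot KK (hKQ.trans hQbot)).symm⟩


end
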